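/- arXiv:2602.22602 — 3 statements merged into one kernel-verified Lean document; each statement's English description precedes it below -/
import Mathlib

section
/- Let (Ω, F, P) be a probability space, let A, G, M be sub-σ-algebras of F, and let Z be an M-measurable integrable random variable with values in ℝ^l. Assume that (i) Z is independent of G, and (ii) A and M are conditionally independent given G. Then Z is independent of the join A ⊔ G. -/
open MeasureTheory ProbabilityTheory

/-- Conditional independence of two sub-σ-algebras given a third, in the standard sense:
for all `A₁` in the first and `A₂` in the second,
`E[1_{A₁} 1_{A₂} | G] = E[1_{A₁} | G] · E[1_{A₂} | G]` almost surely. -/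
def CondIndepSigmaAlgebras {Ω : Type*} [mΩ : MeasurableSpace Ω] (μ : Measure Ω)
    (m₁ m₂ G : MeasurableSpace Ω) : Prop :=
  ∀ A₁ A₂ : Set Ω, MeasurableSet[m₁] A₁ → MeasurableSet[m₂] A₂ →
    μ[(A₁ ∩ A₂).indicator (fun _ => (1 : ℝ)) | G]
      =ᵐ[μ] fun ω => (μ[A₁.indicator (fun _ => (1 : ℝ)) | G]) ω
        * (μ[A₂.indicator (fun _ => (1 : ℝ)) | G]) ω

/-- If an `M`-measurable integrable random vector `Z` is independent of `G`, and `A` and `M`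
are conditionally independent given `G`, then `Z` is independent of the join `A ⊔ G`. -/
theorem indep_join_of_condIndep
    {Ω : Type*} [mΩ : MeasurableSpace Ω] (μ : Measure Ω) [IsProbabilityMeasure μ]
    {l : ℕ} (A G M : MeasurableSpace Ω) (hA : A ≤ mΩ) (hG : G ≤ mΩ) (hM : M ≤ mΩ)
    (Z : Ω → EuclideanSpace ℝ (Fin l)) (hZmeas : Measurable[M] Z)
    (hZint : Integrable Z μ)
    (hZindep : Indep (MeasurableSpace.comap Z inferInstance) G μ)
    (hCondIndep : CondIndepSigmaAlgebras (mΩ := mΩ) μ A M G) :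
    Indep (MeasurableSpace.comap Z inferInstance) (A ⊔ G) μ := by
  classical
  letI : MeasurableSpace Ω := mΩ
  have hZM : MeasurableSpace.comap Z (inferInstance : MeasurableSpace (EuclideanSpace ℝ (Fin l))) ≤ M := by
    rintro s ⟨B, hB, rfl⟩
    exact hZmeas hB
  have hZle : MeasurableSpace.comap Z (inferInstance : MeasurableSpace (EuclideanSpace ℝ (Fin l))) ≤ mΩ := hZM.trans hM
  haveI : SigmaFinite (μ.trim hG) := by
    have : IsFiniteMeasure (μ.trim hG) := isFiniteMeasure_trim hG
    infer_instance
  -- π-system generating A ⊔ G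
  set p2 : Set (Set Ω) := {s | ∃ a g : Set Ω, MeasurableSet[A] a ∧ MeasurableSet[G] g ∧
    s = a ∩ g} with hp2def
  have hgen2 : A ⊔ G = MeasurableSpace.generateFrom p2 := by
    apply le_antisymm
    · refine sup_le ?_ ?_
      · intro s hs
        exact MeasurableSpace.measurableSet_generateFrom
          ⟨s, Set.univ, hs, MeasurableSet.univ, (Set.inter_univ s).symm⟩
      · intro s hs
        exact MeasurableSpace.measurableSet_generateFrom
          ⟨Set.univ, s, MeasurableSet.univ, hs, (Set.univ_inter s).symm⟩
    · refine MeasurableSpace.generateFrom_le ?_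
      rintro s ⟨a, g, ha, hg, rfl⟩
      exact MeasurableSet.inter (le_sup_left (a := A) (b := G) _ ha)
        (le_sup_right (a := A) (b := G) _ hg)
  have hpi2 : IsPiSystem p2 := by
    rintro s ⟨a, g, ha, hg, rfl⟩ t ⟨a', g', ha', hg', rfl⟩ -
    exact ⟨a ∩ a', g ∩ g', ha.inter ha', hg.inter hg', by
      rw [Set.inter_inter_inter_comm]⟩
  refine IndepSets.indep hZle (sup_le hA hG) ?_ hpi2 (@MeasurableSpace.generateFrom_measurableSet Ω (MeasurableSpace.comap Z inferInstance)).symm hgen2 ?_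
  · exact @MeasurableSpace.isPiSystem_measurableSet Ω (MeasurableSpace.comap Z inferInstance)
  rw [IndepSets_iff]
  rintro S T hS ⟨a, g, ha, hg, rfl⟩
  -- memberships in the ambient σ-algebra
  have hSM : MeasurableSet[M] S := hZM _ hS
  have hS0 : MeasurableSet[mΩ] S := hZle _ hS
  have ha0 : MeasurableSet[mΩ] a := hA _ ha
  have hg0 : MeasurableSet[mΩ] g := hG _ hg
  -- conditional expectation of `1_S` given G is the constant `μ S`
  have hSindep : μ[S.indicator (fun _ => (1 : ℝ)) | G]
      =ᵐ[μ] fun _ => (μ S).toReal := by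
    have hsm : StronglyMeasurable[MeasurableSpace.comap Z (inferInstance : MeasurableSpace (EuclideanSpace ℝ (Fin l)))] (S.indicator (fun _ => (1 : ℝ))) :=
      (stronglyMeasurable_const : StronglyMeasurable[MeasurableSpace.comap Z (inferInstance : MeasurableSpace (EuclideanSpace ℝ (Fin l)))] (fun _ : Ω => (1:ℝ))).indicator hS
    have := condExp_indep_eq (μ := μ) hZle hG hsm hZindep
    refine this.trans ?_
    have : ∫ x, S.indicator (fun _ => (1 : ℝ)) x ∂μ = (μ S).toReal := by
      simpa [Measure.real, Pi.one_def] using integral_indicator_one (μ := μ) hS0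
    rw [this]
  -- conditional independence applied to `a` and `S`
  have hCI := hCondIndep a S ha hSM
  -- integrability of indicators
  have hint_aS : Integrable ((a ∩ S).indicator (fun _ => (1 : ℝ))) μ :=
    (integrable_const (1 : ℝ)).indicator (ha0.inter hS0)
  have hint_a : Integrable (a.indicator (fun _ => (1 : ℝ))) μ :=
    (integrable_const (1 : ℝ)).indicator ha0
  -- key computation with real-valued integrals
  have key : (μ ((a ∩ S) ∩ g)).toReal = (μ S).toReal * (μ (a ∩ g)).toReal := by
    have h1 : (μ ((a ∩ S) ∩ g)).toReal
        = ∫ x in g, (a ∩ S).indicator (fun _ => (1 : ℝ)) x ∂μ := by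
      rw [setIntegral_indicator (ha0.inter hS0)]
      simp [Set.inter_comm, Measure.real]
    have h2 : ∫ x in g, (a ∩ S).indicator (fun _ => (1 : ℝ)) x ∂μ
        = ∫ x in g, (μ[(a ∩ S).indicator (fun _ => (1 : ℝ)) | G]) x ∂μ :=
      (setIntegral_condExp hG hint_aS hg).symm
    have h3 : ∫ x in g, (μ[(a ∩ S).indicator (fun _ => (1 : ℝ)) | G]) x ∂μ
        = ∫ x in g, (μ[a.indicator (fun _ => (1 : ℝ)) | G]) x * (μ S).toReal ∂μ := by
      refine integral_congr_ae (ae_restrict_of_ae ?_)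
      filter_upwards [hCI, hSindep] with ω hω hω'
      rw [hω, hω']
    have h4 : ∫ x in g, (μ[a.indicator (fun _ => (1 : ℝ)) | G]) x * (μ S).toReal ∂μ
        = (∫ x in g, (μ[a.indicator (fun _ => (1 : ℝ)) | G]) x ∂μ) * (μ S).toReal := by
      rw [integral_mul_const]
    have h5 : ∫ x in g, (μ[a.indicator (fun _ => (1 : ℝ)) | G]) x ∂μ
        = (μ (a ∩ g)).toReal := by
      rw [setIntegral_condExp hG hint_a hg, setIntegral_indicator ha0]
      simp [Set.inter_comm, Measure.real]
    rw [h1, h2, h3, h4, h5, mul_comm]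
  have hrw : S ∩ (a ∩ g) = (a ∩ S) ∩ g := by
    rw [Set.inter_comm a S, Set.inter_assoc]
  rw [hrw, ← ENNReal.toReal_eq_toReal_iff' (measure_ne_top μ _)
    (ENNReal.mul_ne_top (measure_ne_top μ _) (measure_ne_top μ _)),
    ENNReal.toReal_mul]
  exact key
end

section
/- Let (Ω′, F′, P′) be a probability space, S a metric space, m ≥ 1 and C ≥ 0. Let Z_n, Z : Ω′ → ℝ^d and V_n, V : Ω′ → S be measurable maps and assume: (i) Z_n → Z almost surely and V_n → V almost surely; (ii) the family {|Z_n|^m : n ≥ 1} is uniformly integrable; (iii) for every n, E[|Z_n|^m | σ(V_n)] ≤ C almost surely, where σ(V_n) is the σ-algebra generated by V_n. Then E[|Z|^m | σ(V)] ≤ C almost surely, where σ(V) is the σ-algebra generated by V. -/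
open MeasureTheory Filter Topology
open scoped ENNReal NNReal BoundedContinuousFunction

/-- Auxiliary: pull-out inequality for a single `n`: if `E[F | σ(Vn)] ≤ C` a.s. and
`0 ≤ G ≤ 1`, then `∫ G(Vn) * F ≤ C * ∫ G(Vn)`. -/
lemma aux_integral_mul_le {Ω' : Type*} [mΩ' : MeasurableSpace Ω'] (P' : Measure Ω')
    [IsProbabilityMeasure P'] {S : Type*} [MeasurableSpace S]
    (C : ℝ) (F : Ω' → ℝ) (hF_int : Integrable F P') {Vn : Ω' → S} (hV : Measurable Vn)
    {G : S → ℝ} (hGmeas : Measurable G) (hG0 : ∀ s, 0 ≤ G s) (hG1 : ∀ s, G s ≤ 1)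
    (hbound : P'[F | MeasurableSpace.comap Vn inferInstance] ≤ᵐ[P'] fun _ => C) :
    ∫ ω, G (Vn ω) * F ω ∂P' ≤ C * ∫ ω, G (Vn ω) ∂P' := by
  set m' : MeasurableSpace Ω' := MeasurableSpace.comap Vn inferInstance with hm'
  have hle : m' ≤ mΩ' := hV.comap_le
  haveI : SigmaFinite (P'.trim hle) := inferInstance
  have hVm' : @Measurable Ω' S m' _ Vn := Measurable.of_comap_le le_rfl
  have hGV : StronglyMeasurable[m'] (fun ω => G (Vn ω)) :=
    (hGmeas.comp hVm').stronglyMeasurable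
  have hGV_norm : ∀ ω, ‖G (Vn ω)‖ ≤ 1 := fun ω => by
    rw [Real.norm_eq_abs, abs_of_nonneg (hG0 _)]; exact hG1 _
  have hGV_bdd : ∀ᵐ ω ∂P', ‖(fun ω => G (Vn ω)) ω‖ ≤ 1 := ae_of_all _ hGV_norm
  have hmul :
      P'[(fun ω => G (Vn ω)) * F | m'] =ᵐ[P'] (fun ω => G (Vn ω)) * P'[F | m'] :=
    condExp_stronglyMeasurable_mul_of_bound hle hGV hF_int 1 hGV_bdd
  have hGV_aesm : AEStronglyMeasurable[mΩ'] (fun ω => G (Vn ω)) P' :=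
    (hGmeas.comp hV).aestronglyMeasurable
  have int1 : Integrable (fun ω => G (Vn ω) * (P'[F | m']) ω) P' :=
    integrable_condExp.bdd_mul hGV_aesm (ae_of_all _ hGV_norm)
  have int2 : Integrable (fun ω => G (Vn ω) * C) P' :=
    (integrable_const C).bdd_mul hGV_aesm (ae_of_all _ hGV_norm)
  calc ∫ ω, G (Vn ω) * F ω ∂P'
      = ∫ ω, (P'[(fun ω => G (Vn ω)) * F | m']) ω ∂P' := (integral_condExp hle).symm
    _ = ∫ ω, G (Vn ω) * (P'[F | m']) ω ∂P' := integral_congr_ae hmul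
    _ ≤ ∫ ω, G (Vn ω) * C ∂P' := by
        refine integral_mono_ae int1 int2 ?_
        filter_upwards [hbound] with ω hω
        exact mul_le_mul_of_nonneg_left hω (hG0 _)
    _ = C * ∫ ω, G (Vn ω) ∂P' := by rw [integral_mul_const, mul_comm]

/-- Stability of conditional moment bounds under almost-sure convergence: if `Zₙ → Z` a.s.,
`Vₙ → V` a.s., the family `{|Zₙ|^m}` is uniformly integrable, and
`E[|Zₙ|^m | σ(Vₙ)] ≤ C` a.s. for every `n`, then `E[|Z|^m | σ(V)] ≤ C` a.s. -/
theorem conditional_moment_bound_of_tendsto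
    {Ω' : Type*} [mΩ' : MeasurableSpace Ω'] (P' : Measure Ω') [IsProbabilityMeasure P']
    {S : Type*} [MetricSpace S] [MeasurableSpace S] [BorelSpace S]
    {d : ℕ} (m : ℝ) (hm : 1 ≤ m) (C : ℝ) (hC : 0 ≤ C)
    (Z : ℕ → Ω' → EuclideanSpace ℝ (Fin d)) (Zlim : Ω' → EuclideanSpace ℝ (Fin d))
    (V : ℕ → Ω' → S) (Vlim : Ω' → S)
    (hZmeas : ∀ n, Measurable (Z n)) (hZlim_meas : Measurable Zlim)
    (hVmeas : ∀ n, Measurable (V n)) (hVlim_meas : Measurable Vlim)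
    (hZconv : ∀ᵐ ω ∂P', Tendsto (fun n => Z n ω) atTop (𝓝 (Zlim ω)))
    (hVconv : ∀ᵐ ω ∂P', Tendsto (fun n => V n ω) atTop (𝓝 (Vlim ω)))
    (hUI : UniformIntegrable (fun n ω => ‖Z n ω‖ ^ m) 1 P')
    (hbound : ∀ n,
      P'[(fun ω => ‖Z n ω‖ ^ m) | MeasurableSpace.comap (V n) inferInstance]
        ≤ᵐ[P'] fun _ => C) :
    P'[(fun ω => ‖Zlim ω‖ ^ m) | MeasurableSpace.comap Vlim inferInstance]
      ≤ᵐ[P'] fun _ => C := by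
  classical
  have hm0 : (0 : ℝ) ≤ m := zero_le_one.trans hm
  set f : Ω' → ℝ := fun ω => ‖Zlim ω‖ ^ m with hf_def
  set Fn : ℕ → Ω' → ℝ := fun n ω => ‖Z n ω‖ ^ m with hFn_def
  have hf_nonneg : ∀ ω, 0 ≤ f ω := fun ω => Real.rpow_nonneg (norm_nonneg _) m
  have hFn_nonneg : ∀ n ω, 0 ≤ Fn n ω := fun n ω => Real.rpow_nonneg (norm_nonneg _) m
  have hrpow_cont : Continuous fun x : EuclideanSpace ℝ (Fin d) => ‖x‖ ^ m :=
    continuous_norm.rpow_const fun _ => Or.inr hm0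
  have hf_meas : Measurable f := hrpow_cont.measurable.comp hZlim_meas
  have hconv : ∀ᵐ ω ∂P', Tendsto (fun n => Fn n ω) atTop (𝓝 (f ω)) := by
    filter_upwards [hZconv] with ω hω
    exact (hω.norm).rpow_const (Or.inr hm0)
  obtain ⟨hFn_aesm, hunif, M, hM⟩ := hUI
  have hf_mem : MemLp f 1 P' := by
    refine ⟨hf_meas.aestronglyMeasurable, ?_⟩
    have h1 : eLpNorm f 1 P' ≤ atTop.liminf fun n => eLpNorm (Fn n) 1 P' :=
      Lp.eLpNorm_lim_le_liminf_eLpNorm hFn_aesm f hconv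
    have h2 : (atTop.liminf fun n => eLpNorm (Fn n) 1 P') ≤ (M : ℝ≥0∞) := by
      refine le_trans (Filter.liminf_le_liminf (Filter.Eventually.of_forall hM)) ?_
      rw [Filter.liminf_const]
    exact (h1.trans h2).trans_lt ENNReal.coe_lt_top
  have hf_int : Integrable f P' := memLp_one_iff_integrable.mp hf_mem
  have hFn_int : ∀ n, Integrable (Fn n) P' := fun n =>
    memLp_one_iff_integrable.mp ⟨hFn_aesm n, (hM n).trans_lt ENNReal.coe_lt_top⟩
  -- L¹ convergence
  have hL1' : Tendsto (fun n => eLpNorm (Fn n - f) 1 P') atTop (𝓝 0) :=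
    tendsto_Lp_finite_of_tendsto_ae le_rfl ENNReal.one_ne_top hFn_aesm hf_mem hunif hconv
  have hL1 : Tendsto (fun n => ∫ ω, |Fn n ω - f ω| ∂P') atTop (𝓝 0) := by
    have key : ∀ n, ENNReal.ofReal (∫ ω, |Fn n ω - f ω| ∂P') = eLpNorm (Fn n - f) 1 P' := by
      intro n
      have hint : Integrable (fun ω => |Fn n ω - f ω|) P' := ((hFn_int n).sub hf_int).abs
      rw [eLpNorm_one_eq_lintegral_enorm,
        ofReal_integral_eq_lintegral_ofReal hint
          (ae_of_all _ fun ω => abs_nonneg _)]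
      refine lintegral_congr fun ω => ?_
      rw [← Real.norm_eq_abs, ofReal_norm]
      rfl
    have h2 : Tendsto (fun n => (eLpNorm (Fn n - f) 1 P').toReal) atTop (𝓝 0) := by
      simpa [Function.comp_def] using (ENNReal.tendsto_toReal (by simp)).comp hL1'
    exact h2.congr fun n => by
      rw [← key n, ENNReal.toReal_ofReal (integral_nonneg fun ω => abs_nonneg _)]
  -- Key limiting inequality against bounded continuous test functions
  have hkey : ∀ G : S → ℝ, Continuous G → (∀ s, 0 ≤ G s) → (∀ s, G s ≤ 1) →
      ∫ ω, G (Vlim ω) * f ω ∂P' ≤ C * ∫ ω, G (Vlim ω) ∂P' := by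
    intro G hGcont hG0 hG1
    have hGnorm : ∀ s, ‖G s‖ ≤ 1 := fun s => by
      rw [Real.norm_eq_abs, abs_of_nonneg (hG0 _)]; exact hG1 _
    have hn : ∀ n, ∫ ω, G (V n ω) * Fn n ω ∂P' ≤ C * ∫ ω, G (V n ω) ∂P' := fun n =>
      aux_integral_mul_le P' C (Fn n) (hFn_int n) (hVmeas n) hGcont.measurable hG0 hG1
        (hbound n)
    -- LHS convergence
    have hGVn_aesm : ∀ n, AEStronglyMeasurable (fun ω => G (V n ω)) P' := fun n =>
      (hGcont.measurable.comp (hVmeas n)).aestronglyMeasurable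
    have hGVn_conv : ∀ᵐ ω ∂P', Tendsto (fun n => G (V n ω)) atTop (𝓝 (G (Vlim ω))) := by
      filter_upwards [hVconv] with ω hω
      exact ((hGcont.tendsto _).comp hω)
    have hT1 : Tendsto (fun n => ∫ ω, G (V n ω) * f ω ∂P') atTop
        (𝓝 (∫ ω, G (Vlim ω) * f ω ∂P')) := by
      refine tendsto_integral_of_dominated_convergence f
        (fun n => (hGVn_aesm n).mul hf_meas.aestronglyMeasurable)
        hf_int ?_ ?_
      · intro n
        refine ae_of_all _ fun ω => ?_
        rw [Real.norm_eq_abs, abs_mul, abs_of_nonneg (hG0 _), abs_of_nonneg (hf_nonneg ω)]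
        exact mul_le_of_le_one_left (hf_nonneg ω) (hG1 _)
      · filter_upwards [hGVn_conv] with ω hω
        exact hω.mul_const (f ω)
    have hT2 : Tendsto (fun n => ∫ ω, G (V n ω) * (Fn n ω - f ω) ∂P') atTop (𝓝 0) := by
      refine squeeze_zero_norm (fun n => ?_) hL1
      have int_a : Integrable (fun ω => G (V n ω) * (Fn n ω - f ω)) P' :=
        ((hFn_int n).sub hf_int).bdd_mul (hGVn_aesm n) (ae_of_all _ fun ω => hGnorm _)
      calc ‖∫ ω, G (V n ω) * (Fn n ω - f ω) ∂P'‖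
          ≤ ∫ ω, ‖G (V n ω) * (Fn n ω - f ω)‖ ∂P' := norm_integral_le_integral_norm _
        _ ≤ ∫ ω, |Fn n ω - f ω| ∂P' := by
            refine integral_mono int_a.norm ((hFn_int n).sub hf_int).abs fun ω => ?_
            rw [Real.norm_eq_abs, abs_mul]
            exact mul_le_of_le_one_left (abs_nonneg _)
              (by rw [← Real.norm_eq_abs]; exact hGnorm _)
    have hLHS : Tendsto (fun n => ∫ ω, G (V n ω) * Fn n ω ∂P') atTop
        (𝓝 (∫ ω, G (Vlim ω) * f ω ∂P')) := by
      have heq : ∀ n, ∫ ω, G (V n ω) * Fn n ω ∂P'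
          = (∫ ω, G (V n ω) * f ω ∂P') + ∫ ω, G (V n ω) * (Fn n ω - f ω) ∂P' := by
        intro n
        have inta : Integrable (fun ω => G (V n ω) * f ω) P' :=
          hf_int.bdd_mul (hGVn_aesm n) (ae_of_all _ fun ω => hGnorm _)
        have intb : Integrable (fun ω => G (V n ω) * (Fn n ω - f ω)) P' :=
          ((hFn_int n).sub hf_int).bdd_mul (hGVn_aesm n) (ae_of_all _ fun ω => hGnorm _)
        rw [← integral_add inta intb]
        refine integral_congr_ae (ae_of_all _ fun ω => ?_)
        ring
      have := hT1.add hT2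
      rw [add_zero] at this
      exact this.congr fun n => (heq n).symm
    have hRHS : Tendsto (fun n => C * ∫ ω, G (V n ω) ∂P') atTop
        (𝓝 (C * ∫ ω, G (Vlim ω) ∂P')) := by
      refine Tendsto.const_mul C ?_
      refine tendsto_integral_of_dominated_convergence (fun _ => 1)
        hGVn_aesm (integrable_const 1) (fun n => ae_of_all _ fun ω => hGnorm _) hGVn_conv
    exact le_of_tendsto_of_tendsto' hLHS hRHS hn
  -- Measure-theoretic comparison on S
  set μw : Measure Ω' := P'.withDensity (fun ω => ENNReal.ofReal (f ω)) with hμw_def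
  haveI hμw_fin : IsFiniteMeasure μw := by
    constructor
    rw [hμw_def, withDensity_apply _ MeasurableSet.univ, Measure.restrict_univ]
    exact hf_int.lintegral_lt_top
  set ν₁ : Measure S := μw.map Vlim with hν₁_def
  set ν₂ : Measure S := (ENNReal.ofReal C) • (P'.map Vlim) with hν₂_def
  haveI : IsFiniteMeasure ν₁ := μw.isFiniteMeasure_map Vlim
  haveI : IsFiniteMeasure (P'.map Vlim) := P'.isFiniteMeasure_map Vlim
  haveI : IsFiniteMeasure ν₂ := by
    constructor
    rw [hν₂_def, Measure.smul_apply, smul_eq_mul]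
    exact ENNReal.mul_lt_top ENNReal.ofReal_lt_top (measure_lt_top _ _)
  have hGint : ∀ G : S → ℝ, Continuous G → (∀ s, 0 ≤ G s) → (∀ s, G s ≤ 1) →
      Integrable (fun ω => G (Vlim ω)) P' := by
    intro G hGcont hG0 hG1
    refine (integrable_const (1 : ℝ)).mono'
      ((hGcont.measurable.comp hVlim_meas).aestronglyMeasurable) (ae_of_all _ fun ω => ?_)
    rw [Real.norm_eq_abs, abs_of_nonneg (hG0 _)]; exact hG1 _
  have hlin : ∀ (g : S →ᵇ ℝ≥0), (∀ x, g x ≤ 1) →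
      ∫⁻ x, (g x : ℝ≥0∞) ∂ν₁ ≤ ∫⁻ x, (g x : ℝ≥0∞) ∂ν₂ := by
    intro g hg1
    set G : S → ℝ := fun s => (g s : ℝ) with hG_def
    have hGcont : Continuous G := NNReal.continuous_coe.comp g.continuous
    have hG0 : ∀ s, 0 ≤ G s := fun s => (g s).coe_nonneg
    have hG1 : ∀ s, G s ≤ 1 := fun s => by exact_mod_cast hg1 s
    have hg_meas : Measurable fun x => (g x : ℝ≥0∞) :=
      measurable_coe_nnreal_ennreal.comp g.continuous.measurable
    have hGV_int : Integrable (fun ω => G (Vlim ω)) P' := hGint G hGcont hG0 hG1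
    have hGVf_int : Integrable (fun ω => G (Vlim ω) * f ω) P' :=
      hf_int.bdd_mul ((hGcont.measurable.comp hVlim_meas).aestronglyMeasurable)
        (ae_of_all _ fun ω => by rw [Real.norm_eq_abs, abs_of_nonneg (hG0 _)]; exact hG1 _)
    have hL : ∫⁻ x, (g x : ℝ≥0∞) ∂ν₁ = ENNReal.ofReal (∫ ω, G (Vlim ω) * f ω ∂P') := by
      rw [hν₁_def, lintegral_map hg_meas hVlim_meas, hμw_def,
        lintegral_withDensity_eq_lintegral_mul _ (hf_meas.ennreal_ofReal) _]
      · rw [ofReal_integral_eq_lintegral_ofReal hGVf_int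
          (ae_of_all _ fun ω => mul_nonneg (hG0 _) (hf_nonneg ω))]
        refine lintegral_congr fun ω => ?_
        simp only [Pi.mul_apply]
        rw [ENNReal.ofReal_mul (hG0 _), ENNReal.ofReal_coe_nnreal, mul_comm]
      · exact hg_meas.comp hVlim_meas
    have hR : ∫⁻ x, (g x : ℝ≥0∞) ∂ν₂ = ENNReal.ofReal (C * ∫ ω, G (Vlim ω) ∂P') := by
      rw [hν₂_def, lintegral_smul_measure, lintegral_map hg_meas hVlim_meas]
      have hcoe : ∫⁻ ω, ((g (Vlim ω) : ℝ≥0) : ℝ≥0∞) ∂P'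
          = ∫⁻ ω, ENNReal.ofReal (G (Vlim ω)) ∂P' := by
        refine lintegral_congr fun ω => ?_
        simp only [hG_def]
        exact ENNReal.ofReal_coe_nnreal.symm
      rw [hcoe, ← ofReal_integral_eq_lintegral_ofReal hGV_int (ae_of_all _ fun ω => hG0 _),
        smul_eq_mul, ← ENNReal.ofReal_mul hC]
    rw [hL, hR]
    exact ENNReal.ofReal_le_ofReal (hkey G hGcont hG0 hG1)
  have hν_closed : ∀ K : Set S, IsClosed K → ν₁ K ≤ ν₂ K := by
    intro K hK
    refine ge_of_tendsto (HasOuterApproxClosed.tendsto_lintegral_apprSeq hK ν₂) ?_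
    refine Filter.Eventually.of_forall fun k => ?_
    exact (HasOuterApproxClosed.measure_le_lintegral hK ν₁ k).trans
      (hlin (hK.apprSeq k) (HasOuterApproxClosed.apprSeq_apply_le_one hK k))
  have hν : ∀ B : Set S, MeasurableSet B → ν₁ B ≤ ν₂ B := by
    intro B hB
    rw [hB.measure_eq_iSup_isClosed_of_ne_top (measure_ne_top ν₁ B)]
    refine iSup₂_le fun K hKB => iSup_le fun hK => ?_
    exact (hν_closed K hK).trans (measure_mono hKB)
  have H : ∀ B : Set S, MeasurableSet B →
      ∫ ω in Vlim ⁻¹' B, f ω ∂P' ≤ C * (P' (Vlim ⁻¹' B)).toReal := by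
    intro B hB
    have h1 : ν₁ B = ENNReal.ofReal (∫ ω in Vlim ⁻¹' B, f ω ∂P') := by
      rw [hν₁_def, Measure.map_apply hVlim_meas hB, hμw_def,
        withDensity_apply _ (hVlim_meas hB),
        ofReal_integral_eq_lintegral_ofReal (hf_int.restrict)
          (ae_of_all _ fun ω => hf_nonneg ω)]
    have h2 : ν₂ B = ENNReal.ofReal (C * (P' (Vlim ⁻¹' B)).toReal) := by
      rw [hν₂_def, Measure.smul_apply, Measure.map_apply hVlim_meas hB, smul_eq_mul,
        ENNReal.ofReal_mul hC, ENNReal.ofReal_toReal (measure_ne_top _ _)]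
    have h3 := hν B hB
    rw [h1, h2] at h3
    exact (ENNReal.ofReal_le_ofReal_iff
      (mul_nonneg hC ENNReal.toReal_nonneg)).mp h3
  -- Conclude via conditional expectation
  have hle : MeasurableSpace.comap Vlim inferInstance ≤ mΩ' := hVlim_meas.comap_le
  haveI : SigmaFinite (P'.trim hle) := inferInstance
  set φ : Ω' → ℝ := fun ω => C - (P'[f | MeasurableSpace.comap Vlim inferInstance]) ω
    with hφ_def
  have hφ_meas : StronglyMeasurable[MeasurableSpace.comap Vlim inferInstance] φ :=
    stronglyMeasurable_const.sub stronglyMeasurable_condExp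
  have hφ_int : Integrable φ P' := (integrable_const C).sub integrable_condExp
  have hφ_int_trim : Integrable φ (P'.trim hle) := hφ_int.trim hle hφ_meas
  have h0 : 0 ≤ᵐ[P'.trim hle] φ := by
    refine ae_nonneg_of_forall_setIntegral_nonneg hφ_int_trim ?_
    intro s hs _hμs
    rw [← setIntegral_trim hle hφ_meas hs]
    obtain ⟨B, hB, rfl⟩ := hs
    have hsm : MeasurableSet[MeasurableSpace.comap Vlim inferInstance] (Vlim ⁻¹' B) :=
      ⟨B, hB, rfl⟩
    rw [hφ_def]
    have hXc : Integrable (fun _ : Ω' => C) (P'.restrict (Vlim ⁻¹' B)) := integrable_const C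
    have hYc : Integrable (P'[f | MeasurableSpace.comap Vlim inferInstance])
        (P'.restrict (Vlim ⁻¹' B)) := integrable_condExp.restrict
    rw [integral_sub hXc hYc]
    rw [setIntegral_const, setIntegral_condExp hle hf_int hsm]
    have := H B hB
    rw [smul_eq_mul, mul_comm, measureReal_def]
    linarith
  have h0' : 0 ≤ᵐ[P'] φ := ae_le_of_ae_le_trim h0
  filter_upwards [h0'] with ω hω
  have h1 : 0 ≤ C - (P'[f | MeasurableSpace.comap Vlim inferInstance]) ω := hω
  linarith
end

section
/- Let (Ω₁, F₁, P₁), (Ω₂, F₂, P₂), (Ω₃, F₃, P₃) be probability spaces and let (Ω, F, P) be their product probability space. Let ξ : Ω₃ → {0,1} be measurable with P₃(ξ = 1) = λ ∈ [0,1]. Let Z₁ ∈ L¹(Ω₁, P₁) and Z₂ ∈ L¹(Ω₂, P₂), viewed as random variables on Ω via the coordinate projections π₁, π₂, and let G₁ ⊆ F₁ and G₂ ⊆ F₂ be sub-σ-algebras with G ⊆ F the σ-algebra generated on Ω by the sets {A₁ × A₂ × Ω₃ : A₁ ∈ G₁, A₂ ∈ G₂}. Define Z := 1_{{ξ=1}}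 Z₁ + 1_{{ξ=0}} Z₂ on Ω. Then P-almost everywhere E_P[Z | G] = λ · (E_{P₁}[Z₁ | G₁]) ∘ π₁ + (1−λ) · (E_{P₂}[Z₂ | G₂]) ∘ π₂. -/
open MeasureTheory

/-- The product measure `P₁ ⊗ P₂ ⊗ P₃` on `Ω₁ × Ω₂ × Ω₃` (with the product σ-algebra built
from the given σ-algebras). -/
noncomputable def tripleProd {Ω₁ Ω₂ Ω₃ : Type*}
    {m₁ : MeasurableSpace Ω₁} {m₂ : MeasurableSpace Ω₂} {m₃ : MeasurableSpace Ω₃}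
    (P₁ : Measure Ω₁) (P₂ : Measure Ω₂) (P₃ : Measure Ω₃) : Measure (Ω₁ × Ω₂ × Ω₃) :=
  @Measure.prod _ _ m₁ (@Prod.instMeasurableSpace _ _ m₂ m₃) P₁
    (@Measure.prod _ _ m₂ m₃ P₂ P₃)

/-- Mixture identity for conditional expectations on a product probability space with an
independent Bernoulli switch `ξ` on the third factor:
`E[1_{ξ=1} Z₁ + 1_{ξ=0} Z₂ | G] = λ E[Z₁|G₁] ∘ π₁ + (1−λ) E[Z₂|G₂] ∘ π₂` a.e., where `G` is
generated by the rectangles `A₁ × A₂ × Ω₃` with `A₁ ∈ G₁`, `A₂ ∈ G₂`. -/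
theorem condexp_mixture_product
    {Ω₁ Ω₂ Ω₃ : Type*} [m₁ : MeasurableSpace Ω₁] [m₂ : MeasurableSpace Ω₂]
    [m₃ : MeasurableSpace Ω₃]
    (P₁ : Measure Ω₁) (P₂ : Measure Ω₂) (P₃ : Measure Ω₃)
    [IsProbabilityMeasure P₁] [IsProbabilityMeasure P₂] [IsProbabilityMeasure P₃]
    (lam : ℝ) (hlam : lam ∈ Set.Icc (0 : ℝ) 1)
    (ξ : Ω₃ → Bool) (hξ : Measurable ξ)
    (hξ_law : P₃ {ω₃ | ξ ω₃ = true} = ENNReal.ofReal lam)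
    (Z₁ : Ω₁ → ℝ) (Z₂ : Ω₂ → ℝ) (hZ₁ : Integrable Z₁ P₁) (hZ₂ : Integrable Z₂ P₂)
    (G₁ : MeasurableSpace Ω₁) (hG₁ : G₁ ≤ m₁)
    (G₂ : MeasurableSpace Ω₂) (hG₂ : G₂ ≤ m₂) :
    (tripleProd P₁ P₂ P₃)[(fun ω : Ω₁ × Ω₂ × Ω₃ =>
        if ξ ω.2.2 = true then Z₁ ω.1 else Z₂ ω.2.1)
      | MeasurableSpace.generateFrom
          {s : Set (Ω₁ × Ω₂ × Ω₃) | ∃ A₁ A₂, MeasurableSet[G₁] A₁ ∧ MeasurableSet[G₂] A₂ ∧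
            s = A₁ ×ˢ A₂ ×ˢ (Set.univ : Set Ω₃)}]
      =ᵐ[tripleProd P₁ P₂ P₃]
        fun ω : Ω₁ × Ω₂ × Ω₃ =>
          lam * (P₁[Z₁ | G₁]) ω.1 + (1 - lam) * (P₂[Z₂ | G₂]) ω.2.1 := by
  classical
  letI : MeasurableSpace Ω₁ := m₁
  letI : MeasurableSpace Ω₂ := m₂
  set μ : Measure (Ω₁ × Ω₂ × Ω₃) := tripleProd P₁ P₂ P₃ with hμdef
  have hμ : μ = P₁.prod (P₂.prod P₃) := rfl
  haveI : IsProbabilityMeasure μ :=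
    inferInstanceAs (IsProbabilityMeasure (P₁.prod (P₂.prod P₃)))
  set S : Set (Set (Ω₁ × Ω₂ × Ω₃)) :=
    {s | ∃ A₁ A₂, MeasurableSet[G₁] A₁ ∧ MeasurableSet[G₂] A₂ ∧
      s = A₁ ×ˢ A₂ ×ˢ (Set.univ : Set Ω₃)} with hSdef
  set G : MeasurableSpace (Ω₁ × Ω₂ × Ω₃) := MeasurableSpace.generateFrom S with hGdef
  letI mΩ : MeasurableSpace (Ω₁ × Ω₂ × Ω₃) :=
    @Prod.instMeasurableSpace Ω₁ (Ω₂ × Ω₃) m₁ (@Prod.instMeasurableSpace Ω₂ Ω₃ m₂ m₃)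
  -- `G` is a sub-σ-algebra of the ambient product σ-algebra.
  have hGm : G ≤ mΩ := by
    refine MeasurableSpace.generateFrom_le ?_
    rintro s ⟨A₁, A₂, hA₁, hA₂, rfl⟩
    exact (hG₁ _ hA₁).prod ((hG₂ _ hA₂).prod MeasurableSet.univ)
  -- indicator-type functions of ξ on Ω₃
  set c₁ : Ω₃ → ℝ := fun z => if ξ z = true then 1 else 0 with hc₁def
  set c₀ : Ω₃ → ℝ := fun z => if ξ z = true then 0 else 1 with hc₀def
  have hc₁m : Measurable c₁ := by
    exact (measurable_from_top (f := fun b : Bool => if b = true then (1:ℝ) else 0)).comp hξ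
  have hc₀m : Measurable c₀ := by
    exact (measurable_from_top (f := fun b : Bool => if b = true then (0:ℝ) else 1)).comp hξ
  have hc₁i : Integrable c₁ P₃ := by
    refine (integrable_const (1:ℝ)).mono' hc₁m.aestronglyMeasurable ?_
    refine Filter.Eventually.of_forall fun z => ?_
    simp only [hc₁def]; split <;> simp
  have hc₀i : Integrable c₀ P₃ := by
    refine (integrable_const (1:ℝ)).mono' hc₀m.aestronglyMeasurable ?_
    refine Filter.Eventually.of_forall fun z => ?_
    simp only [hc₀def]; split <;> simp
  have hξset : MeasurableSet {z : Ω₃ | ξ z = true} := hξ (measurableSet_singleton true)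
  have int_c₁ : ∫ z, c₁ z ∂P₃ = lam := by
    have h1 : c₁ = Set.indicator {z : Ω₃ | ξ z = true} (fun _ => (1:ℝ)) := by
      funext z; by_cases h : ξ z = true <;> simp [hc₁def, h, Set.indicator]
    rw [h1, integral_indicator_const _ hξset, measureReal_def, hξ_law, smul_eq_mul, mul_one,
      ENNReal.toReal_ofReal hlam.1]
  have int_c₀ : ∫ z, c₀ z ∂P₃ = 1 - lam := by
    have h0 : c₀ = Set.indicator ({z : Ω₃ | ξ z = true})ᶜ (fun _ => (1:ℝ)) := by
      funext z; by_cases h : ξ z = true <;> simp [hc₀def, h, Set.indicator]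
    rw [h0, integral_indicator_const _ hξset.compl, measureReal_def, prob_compl_eq_one_sub hξset, hξ_law,
      smul_eq_mul, mul_one, ENNReal.toReal_sub_of_le (ENNReal.ofReal_le_one.mpr hlam.2)
        ENNReal.one_ne_top, ENNReal.toReal_one, ENNReal.toReal_ofReal hlam.1]
  -- the random variable and the candidate conditional expectation
  set Z : Ω₁ × Ω₂ × Ω₃ → ℝ := fun ω => if ξ ω.2.2 = true then Z₁ ω.1 else Z₂ ω.2.1 with hZdef
  set g₁ : Ω₁ → ℝ := P₁[Z₁ | G₁] with hg₁def
  set g₂ : Ω₂ → ℝ := P₂[Z₂ | G₂] with hg₂def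
  set g : Ω₁ × Ω₂ × Ω₃ → ℝ := fun ω => lam * g₁ ω.1 + (1 - lam) * g₂ ω.2.1 with hgdef
  -- decomposition of Z as a sum of product-form functions
  have hZsplit : Z = fun ω : Ω₁ × Ω₂ × Ω₃ =>
      Z₁ ω.1 * ((fun y : Ω₂ × Ω₃ => (1:ℝ) * c₁ y.2) ω.2)
      + (1:ℝ) * ((fun y : Ω₂ × Ω₃ => Z₂ y.1 * c₀ y.2) ω.2) := by
    funext ω
    by_cases h : ξ ω.2.2 = true <;> simp [hZdef, hc₁def, hc₀def, h]
  have hZ1i : Integrable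
      (fun ω : Ω₁ × Ω₂ × Ω₃ => Z₁ ω.1 * ((fun y : Ω₂ × Ω₃ => (1:ℝ) * c₁ y.2) ω.2)) μ := by
    rw [hμ]
    exact hZ₁.mul_prod ((integrable_const (1:ℝ)).mul_prod hc₁i)
  have hZ2i : Integrable
      (fun ω : Ω₁ × Ω₂ × Ω₃ => (1:ℝ) * ((fun y : Ω₂ × Ω₃ => Z₂ y.1 * c₀ y.2) ω.2)) μ := by
    rw [hμ]
    exact (integrable_const (1:ℝ)).mul_prod (hZ₂.mul_prod hc₀i)
  have hZint : Integrable Z μ := by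
    rw [hZsplit]; exact hZ1i.add hZ2i
  -- integrability of the candidate
  have hg1i : Integrable (fun ω : Ω₁ × Ω₂ × Ω₃ => g₁ ω.1) μ := by
    have h := (integrable_condExp (f := Z₁) (m := G₁) (μ := P₁)).mul_prod
      ((integrable_const (1:ℝ) (μ := P₂)).mul_prod (integrable_const (1:ℝ) (μ := P₃)))
    rw [hμ]
    simpa [hg₁def] using h
  have hg2i : Integrable (fun ω : Ω₁ × Ω₂ × Ω₃ => g₂ ω.2.1) μ := by
    have h := (integrable_const (1:ℝ) (μ := P₁)).mul_prod
      ((integrable_condExp (f := Z₂) (m := G₂) (μ := P₂)).mul_prod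
        (integrable_const (1:ℝ) (μ := P₃)))
    rw [hμ]
    simpa [hg₂def] using h
  have hgint : Integrable g μ := by
    rw [hgdef]
    exact (hg1i.const_mul lam).add (hg2i.const_mul (1 - lam))
  -- G-strong-measurability of the candidate
  have hfst : @Measurable _ _ G G₁ (fun ω : Ω₁ × Ω₂ × Ω₃ => ω.1) := by
    intro A hA
    refine MeasurableSpace.measurableSet_generateFrom ⟨A, Set.univ, hA, MeasurableSet.univ, ?_⟩
    ext ω; simp
  have hsnd1 : @Measurable _ _ G G₂ (fun ω : Ω₁ × Ω₂ × Ω₃ => ω.2.1) := by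
    intro A hA
    refine MeasurableSpace.measurableSet_generateFrom ⟨Set.univ, A, MeasurableSet.univ, hA, ?_⟩
    ext ω; simp
  have hsm : StronglyMeasurable[G] g := by
    rw [hgdef]
    exact ((stronglyMeasurable_condExp.comp_measurable hfst).const_mul lam).add
      ((stronglyMeasurable_condExp.comp_measurable hsnd1).const_mul (1 - lam))
  -- the key set-integral identity on the generating rectangles
  have hC_basic : ∀ A₁ A₂, MeasurableSet[G₁] A₁ → MeasurableSet[G₂] A₂ →
      ∫ ω in A₁ ×ˢ A₂ ×ˢ (Set.univ : Set Ω₃), g ω ∂μ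
        = ∫ ω in A₁ ×ˢ A₂ ×ˢ (Set.univ : Set Ω₃), Z ω ∂μ := by
    intro A₁ A₂ hA₁ hA₂
    have hA₁' : MeasurableSet A₁ := hG₁ _ hA₁
    have hA₂' : MeasurableSet A₂ := hG₂ _ hA₂
    -- LHS
    have hLg1 : ∫ ω in A₁ ×ˢ A₂ ×ˢ (Set.univ : Set Ω₃),
        (lam * g₁ ω.1) * ((fun y : Ω₂ × Ω₃ => (1:ℝ) * (1:ℝ)) ω.2) ∂μ
          = lam * (∫ x in A₁, g₁ x ∂P₁) * (P₂ A₂).toReal := by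
      rw [hμ]
      rw [setIntegral_prod_mul (fun x => lam * g₁ x) (fun y : Ω₂ × Ω₃ => (1:ℝ) * (1:ℝ))
        A₁ (A₂ ×ˢ (Set.univ : Set Ω₃))]
      rw [setIntegral_prod_mul (fun _ : Ω₂ => (1:ℝ)) (fun _ : Ω₃ => (1:ℝ)) A₂ Set.univ]
      simp [integral_const, measure_univ, integral_const_mul, measureReal_def]
      try ring
    have hLg2 : ∫ ω in A₁ ×ˢ A₂ ×ˢ (Set.univ : Set Ω₃),
        (1:ℝ) * ((fun y : Ω₂ × Ω₃ => ((1 - lam) * g₂ y.1) * (1:ℝ)) ω.2) ∂μ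
          = (1 - lam) * (P₁ A₁).toReal * ∫ y in A₂, g₂ y ∂P₂ := by
      rw [hμ]
      rw [setIntegral_prod_mul (fun _ : Ω₁ => (1:ℝ))
        (fun y : Ω₂ × Ω₃ => ((1 - lam) * g₂ y.1) * (1:ℝ)) A₁ (A₂ ×ˢ (Set.univ : Set Ω₃))]
      rw [setIntegral_prod_mul (fun y : Ω₂ => (1 - lam) * g₂ y) (fun _ : Ω₃ => (1:ℝ))
        A₂ Set.univ]
      simp [integral_const, measure_univ, integral_const_mul, measureReal_def]
      try ring
    -- RHS pieces
    have hRZ1 : ∫ ω in A₁ ×ˢ A₂ ×ˢ (Set.univ : Set Ω₃),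
        Z₁ ω.1 * ((fun y : Ω₂ × Ω₃ => (1:ℝ) * c₁ y.2) ω.2) ∂μ
          = (∫ x in A₁, Z₁ x ∂P₁) * (P₂ A₂).toReal * lam := by
      rw [hμ]
      rw [setIntegral_prod_mul Z₁ (fun y : Ω₂ × Ω₃ => (1:ℝ) * c₁ y.2)
        A₁ (A₂ ×ˢ (Set.univ : Set Ω₃))]
      rw [setIntegral_prod_mul (fun _ : Ω₂ => (1:ℝ)) c₁ A₂ Set.univ]
      rw [Measure.restrict_univ, int_c₁]
      simp [integral_const, measureReal_def]
      try ring
    have hRZ2 : ∫ ω in A₁ ×ˢ A₂ ×ˢ (Set.univ : Set Ω₃),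
        (1:ℝ) * ((fun y : Ω₂ × Ω₃ => Z₂ y.1 * c₀ y.2) ω.2) ∂μ
          = (P₁ A₁).toReal * ((∫ y in A₂, Z₂ y ∂P₂) * (1 - lam)) := by
      rw [hμ]
      rw [setIntegral_prod_mul (fun _ : Ω₁ => (1:ℝ))
        (fun y : Ω₂ × Ω₃ => Z₂ y.1 * c₀ y.2) A₁ (A₂ ×ˢ (Set.univ : Set Ω₃))]
      rw [setIntegral_prod_mul Z₂ c₀ A₂ Set.univ]
      rw [Measure.restrict_univ, int_c₀]
      simp [integral_const, measureReal_def]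
    -- put together
    have hgeq : ∫ ω in A₁ ×ˢ A₂ ×ˢ (Set.univ : Set Ω₃), g ω ∂μ
        = lam * (∫ x in A₁, g₁ x ∂P₁) * (P₂ A₂).toReal
          + (1 - lam) * (P₁ A₁).toReal * ∫ y in A₂, g₂ y ∂P₂ := by
      rw [← hLg1, ← hLg2, ← integral_add]
      · apply setIntegral_congr_fun ((hA₁').prod ((hA₂').prod MeasurableSet.univ))
        intro ω _
        simp [hgdef]
        try ring
      · exact ((hg1i.const_mul lam).congr (by
          refine Filter.Eventually.of_forall fun ω => ?_; ring)).integrableOn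
      · exact ((hg2i.const_mul (1 - lam)).congr (by
          refine Filter.Eventually.of_forall fun ω => ?_; ring)).integrableOn
    have hZeq : ∫ ω in A₁ ×ˢ A₂ ×ˢ (Set.univ : Set Ω₃), Z ω ∂μ
        = (∫ x in A₁, Z₁ x ∂P₁) * (P₂ A₂).toReal * lam
          + (P₁ A₁).toReal * ((∫ y in A₂, Z₂ y ∂P₂) * (1 - lam)) := by
      rw [← hRZ1, ← hRZ2, ← integral_add hZ1i.integrableOn hZ2i.integrableOn]
      apply setIntegral_congr_fun ((hA₁').prod ((hA₂').prod MeasurableSet.univ))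
      intro ω _
      have := congrFun hZsplit ω
      simpa using this
    rw [hgeq, hZeq]
    rw [setIntegral_condExp hG₁ hZ₁ hA₁, setIntegral_condExp hG₂ hZ₂ hA₂]
    ring
  -- total-integral identity (rectangle with both sides `univ`)
  have hC_univ : ∫ ω, g ω ∂μ = ∫ ω, Z ω ∂μ := by
    have h := hC_basic Set.univ Set.univ MeasurableSet.univ MeasurableSet.univ
    simpa [Set.univ_prod_univ, Measure.restrict_univ] using h
  -- extend the set-integral identity to all of `G` via the π-λ theorem
  have hS_pi : IsPiSystem S := by
    rintro s ⟨A₁, A₂, hA₁, hA₂, rfl⟩ t ⟨B₁, B₂, hB₁, hB₂, rfl⟩ -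
    refine ⟨A₁ ∩ B₁, A₂ ∩ B₂, hA₁.inter hB₁, hA₂.inter hB₂, ?_⟩
    ext ω
    simp [Set.mem_prod]
    tauto
  have hC : ∀ s : Set (Ω₁ × Ω₂ × Ω₃), MeasurableSet[G] s →
      ∫ ω in s, g ω ∂μ = ∫ ω in s, Z ω ∂μ := by
    intro s hs
    refine @MeasurableSpace.induction_on_inter (Ω₁ × Ω₂ × Ω₃) G
      (fun t _ => ∫ ω in t, g ω ∂μ = ∫ ω in t, Z ω ∂μ) S hGdef hS_pi ?_ ?_ ?_ ?_ s hs
    · simp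
    · rintro t ⟨A₁, A₂, hA₁, hA₂, rfl⟩
      exact hC_basic A₁ A₂ hA₁ hA₂
    · intro t ht hCt
      have ht' : MeasurableSet t := hGm t ht
      have hg' := integral_add_compl ht' hgint
      have hZ' := integral_add_compl ht' hZint
      have : ∫ ω in t, g ω ∂μ + ∫ ω in tᶜ, g ω ∂μ
          = ∫ ω in t, Z ω ∂μ + ∫ ω in tᶜ, Z ω ∂μ := by
        rw [hg', hZ', hC_univ]
      linarith
    · intro f hdisj hfm hCf
      have hfm' : ∀ i, MeasurableSet (f i) := fun i => hGm _ (hfm i)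
      rw [integral_iUnion hfm' hdisj hgint.integrableOn,
        integral_iUnion hfm' hdisj hZint.integrableOn]
      exact tsum_congr hCf
  -- conclude by uniqueness of conditional expectation
  haveI : SigmaFinite (μ.trim hGm) := inferInstance
  have key : g =ᵐ[μ] μ[Z | G] :=
    ae_eq_condExp_of_forall_setIntegral_eq hGm hZint
      (fun s _ _ => hgint.integrableOn)
      (fun s hs _ => hC s hs)
      hsm.aestronglyMeasurable
  exact key.symm
end
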